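/- Let (E,d) be an (ε,λ)-complete RM space with base (Ω,ℱ,P). Then E is d-stable if and only if E is d-σ-stable. -/

import Mathlib

open MeasureTheory Filter Set

variable {Ω : Type*} [MeasurableSpace Ω]

/-- A random metric space (RM space) with base `(Ω, ℱ, μ)`: the random distance is
represented by measurable nonnegative functions, all axioms holding `μ`-a.e. -/
structure RMSpace (μ : MeasureTheory.Measure Ω) (E : Type*) where
  dist : E → E → Ω → ℝ
  dist_meas : ∀ x y, Measurable (dist x y)
  dist_nonneg : ∀ x y, ∀ᵐ ω ∂μ, 0 ≤ dist x y ω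
  dist_self : ∀ x, ∀ᵐ ω ∂μ, dist x x ω = 0
  eq_of_dist_eq_zero : ∀ x y, (∀ᵐ ω ∂μ, dist x y ω = 0) → x = y
  dist_symm : ∀ x y, ∀ᵐ ω ∂μ, dist x y ω = dist y x ω
  dist_triangle : ∀ x y z, ∀ᵐ ω ∂μ, dist x z ω ≤ dist x y ω + dist y z ω

/-- A countable measurable partition of `Ω`. -/
def IsMeasPartition (A : ℕ → Set Ω) : Prop :=
  (∀ n, MeasurableSet (A n)) ∧ Pairwise (Function.onFun Disjoint A) ∧ (⋃ n, A n) = Set.univ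

variable {μ : MeasureTheory.Measure Ω} {E : Type*}

/-- `G` is `d`-`σ`-stable. -/
def RMSpace.SigmaStable (M : RMSpace μ E) (G : Set E) : Prop :=
  ∀ x : ℕ → E, (∀ n, x n ∈ G) → ∀ A : ℕ → Set Ω, IsMeasPartition A →
    ∃ y ∈ G, ∀ n, ∀ᵐ ω ∂μ, ω ∈ A n → M.dist y (x n) ω = 0

/-- `G` is `d`-stable. -/
def RMSpace.DStable (M : RMSpace μ E) (G : Set E) : Prop :=
  ∀ x₁ ∈ G, ∀ x₂ ∈ G, ∀ A : Set Ω, MeasurableSet A →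
    ∃ y ∈ G, (∀ᵐ ω ∂μ, ω ∈ A → M.dist y x₁ ω = 0) ∧
      (∀ᵐ ω ∂μ, ω ∉ A → M.dist y x₂ ω = 0)

/-- Convergence in the `(ε,λ)`-topology, i.e. convergence in probability. -/
def RMSpace.TendstoPr (M : RMSpace μ E) (x : ℕ → E) (y : E) : Prop :=
  MeasureTheory.TendstoInMeasure μ (fun n ω => M.dist (x n) y ω) atTop 0

/-- Cauchy with respect to the `(ε,λ)`-uniformity. -/
def RMSpace.CauchyPr (M : RMSpace μ E) (x : ℕ → E) : Prop :=
  ∀ ε : ℝ, 0 < ε →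
    Tendsto (fun p : ℕ × ℕ => μ {ω | ε ≤ M.dist (x p.1) (x p.2) ω}) atTop (nhds 0)

/-- Convergence with respect to the `L⁰`-uniformity. -/
def RMSpace.TendstoL0 (M : RMSpace μ E) (x : ℕ → E) (y : E) : Prop :=
  ∀ ε : Ω → ℝ, (∀ᵐ ω ∂μ, 0 < ε ω) → ∃ N, ∀ n ≥ N, ∀ᵐ ω ∂μ, M.dist (x n) y ω ≤ ε ω

/-- Cauchy with respect to the `L⁰`-uniformity. -/
def RMSpace.CauchyL0 (M : RMSpace μ E) (x : ℕ → E) : Prop :=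
  ∀ ε : Ω → ℝ, (∀ᵐ ω ∂μ, 0 < ε ω) →
    ∃ N, ∀ m ≥ N, ∀ n ≥ N, ∀ᵐ ω ∂μ, M.dist (x m) (x n) ω ≤ ε ω

/-- `(ε,λ)`-completeness. -/
def RMSpace.CompletePr (M : RMSpace μ E) : Prop :=
  ∀ x : ℕ → E, M.CauchyPr x → ∃ y, M.TendstoPr x y

/-- `L⁰`-completeness. -/
def RMSpace.CompleteL0 (M : RMSpace μ E) : Prop :=
  ∀ x : ℕ → E, M.CauchyL0 x → ∃ y, M.TendstoL0 x y

/-- `m` represents the random distance `d(x,G) = ⋀{d(x,g) : g ∈ G}` in `L⁰`. -/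
def RMSpace.IsInfDist (M : RMSpace μ E) (x : E) (G : Set E) (m : Ω → ℝ) : Prop :=
  (∀ g ∈ G, ∀ᵐ ω ∂μ, m ω ≤ M.dist x g ω) ∧
    ∀ b : Ω → ℝ, (∀ g ∈ G, ∀ᵐ ω ∂μ, b ω ≤ M.dist x g ω) → ∀ᵐ ω ∂μ, b ω ≤ m ω

/-  STATEMENT 9: an `(ε,λ)`-complete RM space is `d`-stable iff it is `d`-`σ`-stable. -/

namespace RMSpace

variable [MeasureTheory.IsProbabilityMeasure μ]

omit [MeasureTheory.IsProbabilityMeasure μ] in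
private lemma ae_all_le {M : RMSpace μ E} (a c : E) (x : ℕ → E) :
    ∀ᵐ ω ∂μ, ∀ n : ℕ, M.dist a c ω ≤ M.dist a (x n) ω + M.dist (x n) c ω :=
  ae_all_iff.mpr fun n => M.dist_triangle a (x n) c

theorem completePr_dStable_iff_dSigmaStable' (M : RMSpace μ E) (hc : M.CompletePr) :
    M.DStable Set.univ ↔ M.SigmaStable Set.univ := by
  constructor
  · -- d-stable → sigma-stable
    intro hd x hx A hA
    obtain ⟨hAm, hAd, hAu⟩ := hA
    set B : ℕ → Set Ω := fun k => ⋃ n ∈ Finset.range (k + 1), A n with hBdef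
    have hBm : ∀ k, MeasurableSet (B k) :=
      fun k => Finset.measurableSet_biUnion _ fun n _ => hAm n
    -- construct the gluing sequence
    let y : ℕ → E := fun k => Nat.rec (x 0)
      (fun k yk => (hd yk (mem_univ _) (x (k + 1)) (mem_univ _) (B k) (hBm k)).choose) k
    have hystep : ∀ k, (∀ᵐ ω ∂μ, ω ∈ B k → M.dist (y (k + 1)) (y k) ω = 0) ∧
        (∀ᵐ ω ∂μ, ω ∉ B k → M.dist (y (k + 1)) (x (k + 1)) ω = 0) := by
      intro k
      exact (hd (y k) (mem_univ _) (x (k + 1)) (mem_univ _) (B k) (hBm k)).choose_spec.2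
    -- key: y k agrees with x n on A n for n ≤ k
    have key : ∀ k n, n ≤ k → ∀ᵐ ω ∂μ, ω ∈ A n → M.dist (y k) (x n) ω = 0 := by
      intro k
      induction k with
      | zero =>
        intro n hn
        interval_cases n
        filter_upwards [M.dist_self (x 0)] with ω h _
        exact h
      | succ k ih =>
        intro n hn
        rcases Nat.lt_succ_iff_lt_or_eq.mp (Nat.lt_succ_of_le hn) with h | h
        · have h' : n ≤ k := Nat.lt_succ_iff.mp h
          filter_upwards [(hystep k).1, ih n h', M.dist_triangle (y (k + 1)) (y k) (x n),
            M.dist_nonneg (y (k + 1)) (x n)] with ω h1 h2 ht hnn hmem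
          have hBmem : ω ∈ B k :=
            Set.mem_biUnion (Finset.mem_range.mpr (Nat.lt_succ_of_le h')) hmem
          linarith [h1 hBmem, h2 hmem]
        · subst h
          filter_upwards [(hystep k).2] with ω h2 hmem
          apply h2
          intro hB
          rw [Set.mem_iUnion₂] at hB
          obtain ⟨m, hm, hmem'⟩ := hB
          exact Set.disjoint_left.mp
            (hAd (Nat.ne_of_lt (Finset.mem_range.mp hm)).symm) hmem hmem'
    have key' : ∀ k, ∀ᵐ ω ∂μ, ∀ n, n ≤ k → ω ∈ A n → M.dist (y k) (x n) ω = 0 := by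
      intro k
      rw [ae_all_iff]
      intro n
      by_cases hn : n ≤ k
      · filter_upwards [key k n hn] with ω h _ hm; exact h hm
      · filter_upwards with ω h; exact absurd h hn
    -- agreement of y m and y k on B K
    have hpair : ∀ m k K, K ≤ m → K ≤ k →
        ∀ᵐ ω ∂μ, ω ∈ B K → M.dist (y m) (y k) ω = 0 := by
      intro m k K hKm hKk
      filter_upwards [key' m, key' k, ae_all_le (M := M) (y m) (y k) x,
        M.dist_nonneg (y m) (y k),
        ae_all_iff.mpr fun n => M.dist_symm (x n) (y k)] with ω hm hk ht hnn hsym hB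
      rw [hBdef, Set.mem_iUnion₂] at hB
      obtain ⟨n, hn, hmem⟩ := hB
      have hn' : n ≤ K := Nat.lt_succ_iff.mp (Finset.mem_range.mp hn)
      have h1 := hm n (hn'.trans hKm) hmem
      have h2 := hk n (hn'.trans hKk) hmem
      linarith [ht n, hsym n]
    -- y is Cauchy in probability
    have hBc : Tendsto (fun K => μ (B K)ᶜ) atTop (nhds 0) := by
      have h0 : (⋂ K, (B K)ᶜ) = ∅ := by
        rw [← Set.compl_iUnion]
        have : (⋃ K, B K) = Set.univ := by
          rw [Set.eq_univ_iff_forall]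
          intro ω
          have : ω ∈ ⋃ n, A n := hAu ▸ Set.mem_univ ω
          obtain ⟨n, hn⟩ := Set.mem_iUnion.mp this
          exact Set.mem_iUnion.mpr ⟨n, Set.mem_biUnion (Finset.self_mem_range_succ n) hn⟩
        simp [this]
      have := MeasureTheory.tendsto_measure_iInter_atTop
        (μ := μ) (s := fun K => (B K)ᶜ)
        (fun K => (hBm K).compl.nullMeasurableSet)
        (fun i j hij => Set.compl_subset_compl.mpr
          (Set.biUnion_subset_biUnion_left (Finset.range_mono (by omega))))
        ⟨0, measure_ne_top μ _⟩
      rwa [h0, measure_empty] at this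
    have hmin : Tendsto (fun p : ℕ × ℕ => min p.1 p.2) atTop atTop := by
      rw [tendsto_atTop]
      intro b
      rw [eventually_atTop]
      exact ⟨(b, b), fun p hp => le_min hp.1 hp.2⟩
    have hcauchy : M.CauchyPr y := by
      intro ε hε
      have hbound : ∀ p : ℕ × ℕ,
          μ {ω | ε ≤ M.dist (y p.1) (y p.2) ω} ≤ μ (B (min p.1 p.2))ᶜ := by
        intro p
        have h := hpair p.1 p.2 (min p.1 p.2) (min_le_left _ _) (min_le_right _ _)
        set N := {ω | ¬ (ω ∈ B (min p.1 p.2) → M.dist (y p.1) (y p.2) ω = 0)} with hN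
        have hNnull : μ N = 0 := h
        calc μ {ω | ε ≤ M.dist (y p.1) (y p.2) ω}
            ≤ μ ((B (min p.1 p.2))ᶜ ∪ N) := by
              apply measure_mono
              intro ω hω
              by_cases hB : ω ∈ B (min p.1 p.2)
              · right
                intro hQ
                have := hQ hB
                simp only [Set.mem_setOf_eq] at hω
                linarith
              · exact Or.inl hB
          _ ≤ μ (B (min p.1 p.2))ᶜ + μ N := measure_union_le _ _
          _ = μ (B (min p.1 p.2))ᶜ := by rw [hNnull, add_zero]
      exact tendsto_of_tendsto_of_tendsto_of_le_of_le tendsto_const_nhds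
        (hBc.comp hmin) (fun p => zero_le) hbound
    obtain ⟨z, hz⟩ := hc y hcauchy
    refine ⟨z, Set.mem_univ _, fun n => ?_⟩
    -- on A n, dist z (x n) is ≤ dist (y k) z a.e., for every k ≥ n
    have hk : ∀ k, n ≤ k →
        ∀ᵐ ω ∂μ, ω ∈ A n → M.dist z (x n) ω ≤ M.dist (y k) z ω := by
      intro k hnk
      filter_upwards [key k n hnk, M.dist_triangle z (y k) (x n),
        M.dist_symm z (y k)] with ω h1 ht hs hmem
      rw [h1 hmem, add_zero] at ht
      rwa [← hs]
    have hnull : ∀ ε : ℝ, 0 < ε →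
        μ (A n ∩ {ω | ε ≤ M.dist z (x n) ω}) = 0 := by
      intro ε hε
      set c := μ (A n ∩ {ω | ε ≤ M.dist z (x n) ω}) with hcdef
      have hc0 : c ≤ 0 := by
        refine ge_of_tendsto (tendstoInMeasure_iff_dist.mp hz ε hε) (eventually_atTop.mpr ⟨n, fun k hnk => ?_⟩)
        set S := {ω | ε ≤ Dist.dist (M.dist (y k) z ω) ((0 : Ω → ℝ) ω)} with hS
        show c ≤ μ S
        set N := {ω | ¬ (ω ∈ A n → M.dist z (x n) ω ≤ M.dist (y k) z ω)} with hN
        have hNnull : μ N = 0 := hk k hnk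
        calc c ≤ μ (S ∪ N) := by
              apply measure_mono
              rintro ω ⟨hA', hε'⟩
              by_cases hQ : ω ∈ A n → M.dist z (x n) ω ≤ M.dist (y k) z ω
              · left
                simp only [hS, Set.mem_setOf_eq, Pi.zero_apply, Real.dist_eq, sub_zero]
                simp only [Set.mem_setOf_eq] at hε'
                calc ε ≤ M.dist (y k) z ω := hε'.trans (hQ hA')
                  _ ≤ |M.dist (y k) z ω| := le_abs_self _
              · exact Or.inr hQ
          _ ≤ μ S + μ N := measure_union_le _ _
          _ = μ S := by rw [hNnull, add_zero]
      exact le_antisymm hc0 zero_le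
    have hT : μ (⋃ j : ℕ, (A n ∩ {ω | 1 / (j + 1 : ℝ) ≤ M.dist z (x n) ω})) = 0 :=
      measure_iUnion_null fun j => hnull _ (by positivity)
    have hT' := measure_eq_zero_iff_ae_notMem.mp hT
    filter_upwards [hT', M.dist_nonneg z (x n)] with ω hω hnn hmem
    by_contra hne
    have hpos : 0 < M.dist z (x n) ω := lt_of_le_of_ne hnn (fun h => hne h.symm)
    obtain ⟨j, hj⟩ := exists_nat_one_div_lt hpos
    exact hω (Set.mem_iUnion.mpr ⟨j, hmem, le_of_lt hj⟩)
  · -- sigma-stable → d-stable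
    intro hs x₁ _ x₂ _ A hAm
    set A' : ℕ → Set Ω := fun n => if n = 0 then A else if n = 1 then Aᶜ else ∅ with hA'
    set x' : ℕ → E := fun n => if n = 0 then x₁ else x₂ with hx'
    have hpart : IsMeasPartition A' := by
      refine ⟨fun n => ?_, fun i j hij => ?_, ?_⟩
      · rcases n with _ | _ | n <;> simp [hA', hAm, hAm.compl]
      · rcases i with _ | _ | i <;> rcases j with _ | _ | j <;>
          first
            | exact absurd rfl hij
            | simp [Function.onFun, A', disjoint_compl_right, disjoint_compl_left]
      · rw [Set.eq_univ_iff_forall]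
        intro ω
        by_cases h : ω ∈ A
        · exact Set.mem_iUnion.mpr ⟨0, by simp [hA', h]⟩
        · exact Set.mem_iUnion.mpr ⟨1, by simp [hA', h]⟩
    obtain ⟨y, _, hy⟩ := hs x' (fun n => Set.mem_univ _) A' hpart
    refine ⟨y, Set.mem_univ _, ?_, ?_⟩
    · have := hy 0
      simpa [hA', hx'] using this
    · have := hy 1
      simpa [hA', hx'] using this

end RMSpace

/-- an `(ε,λ)`-complete RM space is `d`-stable iff it is `d`-`σ`-stable. -/
theorem completePr_dStable_iff_dSigmaStable [MeasureTheory.IsProbabilityMeasure μ]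
    (M : RMSpace μ E) (hc : M.CompletePr) :
    M.DStable Set.univ ↔ M.SigmaStable Set.univ :=
  RMSpace.completePr_dStable_iff_dSigmaStable' M hc
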